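/- arXiv:1903.04931 — 3 statements merged into one kernel-verified Lean document; each statement's English description precedes it below -/
import Mathlib

section
/- The function N satisfies limsup_{s→+∞} (1/s)·∫₀ˢ N(ζ) dζ = +∞ (in the extended reals); equivalently, for every M ∈ ℝ and every s₀ > 0 there exists s > s₀ with (1/s)·∫₀ˢ N(ζ) dζ > M. -/
set_option maxHeartbeats 1000000


open Real Filter

/-- The even smooth Nussbaum-type function `N(s) = exp(s²)·cos((π/2)·s)`. -/
noncomputable def Nfun (s : ℝ) : ℝ := Real.exp (s ^ 2) * Real.cos (Real.pi / 2 * s)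


lemma Nfun_cont : Continuous Nfun := by
  unfold Nfun; fun_prop

lemma exp_ge_sq (x : ℝ) (hx : 0 ≤ x) : (x/2+1)^2 ≤ Real.exp x := by
  have h := Real.add_one_le_exp (x/2)
  have h2 : Real.exp x = (Real.exp (x/2))^2 := by
    rw [sq, ← Real.exp_add]; norm_num
  nlinarith [Real.exp_pos (x/2)]

lemma key (M s₀ : ℝ) (hs₀ : 0 < s₀) :
    ∃ s : ℝ, s₀ < s ∧ M < 1 / s * ∫ ζ in (0:ℝ)..s, Nfun ζ := by
  obtain ⟨n, hn⟩ := exists_nat_gt (max s₀ (4*|M|+4))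
  set k : ℕ := n + 1 with hk
  clear_value k
  have hk1 : (1:ℝ) ≤ k := by exact_mod_cast Nat.one_le_iff_ne_zero.2 (by omega)
  have hkgt : max s₀ (4*|M|+4) < k := lt_of_lt_of_le hn (by rw [hk]; exact_mod_cast Nat.le_succ n)
  have hks : s₀ < k := lt_of_le_of_lt (le_max_left _ _) hkgt
  have hkM : 4*|M|+4 < k := lt_of_le_of_lt (le_max_right _ _) hkgt
  set b : ℝ := 4 * k with hb
  set a : ℝ := 4 * k - 1/2 with ha
  set c : ℝ := 4 * k - 1 with hc
  clear_value b a c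
  have hpi := Real.pi_pos
  have hca : c ≤ a := by rw [hc, ha]; linarith
  have hab : a ≤ b := by rw [ha, hb]; linarith
  have h0c : (0:ℝ) ≤ c := by rw [hc]; linarith
  -- cos rewriting
  have hcos : ∀ ζ : ℝ, Real.cos (Real.pi / 2 * ζ) = Real.cos (Real.pi / 2 * ζ - k * (2 * Real.pi)) := by
    intro ζ
    have h := Real.cos_add_int_mul_two_pi (Real.pi / 2 * ζ - k * (2 * Real.pi)) k
    rw [← h]; congr 1; push_cast; ring
  -- nonneg on [c,b]
  have hNpos : ∀ ζ ∈ Set.Icc c b, 0 ≤ Nfun ζ := by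
    intro ζ hζ
    have h1 : c ≤ ζ := hζ.1
    have h2 : ζ ≤ b := hζ.2
    have ht1 : -(Real.pi/2) ≤ Real.pi / 2 * ζ - k * (2 * Real.pi) := by
      rw [hc] at h1; nlinarith
    have ht2 : Real.pi / 2 * ζ - k * (2 * Real.pi) ≤ Real.pi/2 := by
      rw [hb] at h2; nlinarith
    have := Real.cos_nonneg_of_mem_Icc (x := Real.pi / 2 * ζ - k * (2 * Real.pi)) ⟨ht1, ht2⟩
    unfold Nfun
    rw [hcos ζ]
    positivity
  -- lower bound on [a,b]
  have hconst : ∀ ζ ∈ Set.Icc a b, Real.sqrt 2 / 2 * Real.exp (a ^ 2) ≤ Nfun ζ := by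
    intro ζ hζ
    have h1 : a ≤ ζ := hζ.1
    have h2 : ζ ≤ b := hζ.2
    have ha0 : 0 ≤ a := by rw [ha]; linarith
    have h1' : 4*(k:ℝ) - 1/2 ≤ ζ := by rw [ha] at h1; exact h1
    have h2' : ζ ≤ 4*(k:ℝ) := by rw [hb] at h2; exact h2
    set t : ℝ := Real.pi / 2 * ζ - k * (2 * Real.pi) with htdef
    clear_value t
    have ht1 : -(Real.pi/4) ≤ t := by rw [htdef]; nlinarith
    have ht2 : t ≤ 0 := by rw [htdef]; nlinarith
    have hcos2 : Real.sqrt 2 / 2 ≤ Real.cos t := by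
      rw [← Real.cos_neg t, ← Real.cos_pi_div_four]
      exact Real.cos_le_cos_of_nonneg_of_le_pi (by linarith) (by linarith) (by linarith)
    have hexp : Real.exp (a ^ 2) ≤ Real.exp (ζ ^ 2) :=
      Real.exp_le_exp.2 (by nlinarith)
    unfold Nfun
    rw [hcos ζ, ← htdef]
    calc Real.sqrt 2 / 2 * Real.exp (a ^ 2) ≤ Real.cos t * Real.exp (ζ ^ 2) := by
          exact mul_le_mul hcos2 hexp (Real.exp_pos _).le
            (Real.cos_nonneg_of_mem_Icc ⟨by linarith, by linarith⟩)
      _ = Real.exp (ζ ^ 2) * Real.cos t := by ring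
  have hInt : ∀ u v : ℝ, IntervalIntegrable Nfun MeasureTheory.volume u v :=
    fun u v => Nfun_cont.intervalIntegrable u v
  -- ∫ a..b ≥ (b-a)*const
  have hI1 : (b - a) * (Real.sqrt 2 / 2 * Real.exp (a ^ 2)) ≤ ∫ ζ in a..b, Nfun ζ := by
    have := intervalIntegral.integral_mono_on hab (intervalIntegrable_const) (hInt a b) hconst
    rwa [intervalIntegral.integral_const, smul_eq_mul] at this
  have hI2 : (0:ℝ) ≤ ∫ ζ in c..a, Nfun ζ := by
    apply intervalIntegral.integral_nonneg hca
    intro u hu; exact hNpos u ⟨hu.1, le_trans hu.2 hab⟩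
  have hI3 : |∫ ζ in (0:ℝ)..c, Nfun ζ| ≤ Real.exp (c ^ 2) * |c - 0| := by
    rw [← Real.norm_eq_abs]
    apply intervalIntegral.norm_integral_le_of_norm_le_const
    intro x hx
    rw [Set.uIoc_of_le h0c] at hx
    have hx1 : 0 ≤ x := le_of_lt hx.1
    have hx2 : x ≤ c := hx.2
    unfold Nfun
    rw [Real.norm_eq_abs, abs_mul, abs_of_pos (Real.exp_pos _)]
    calc Real.exp (x ^ 2) * |Real.cos (Real.pi / 2 * x)| ≤ Real.exp (x ^ 2) * 1 := by
          apply mul_le_mul_of_nonneg_left (Real.abs_cos_le_one _) (Real.exp_pos _).le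
      _ ≤ Real.exp (c ^ 2) := by rw [mul_one]; exact Real.exp_le_exp.2 (by nlinarith)
  -- combine
  have hsplit : (∫ ζ in (0:ℝ)..b, Nfun ζ)
      = (∫ ζ in (0:ℝ)..c, Nfun ζ) + (∫ ζ in c..a, Nfun ζ) + (∫ ζ in a..b, Nfun ζ) := by
    rw [intervalIntegral.integral_add_adjacent_intervals (hInt 0 c) (hInt c a),
      intervalIntegral.integral_add_adjacent_intervals (hInt 0 a) (hInt a b)]
  have hc0 : -(Real.exp (c^2) * c) ≤ ∫ ζ in (0:ℝ)..c, Nfun ζ := by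
    have h := (abs_le.1 hI3).1
    rw [sub_zero, abs_of_nonneg h0c] at h
    linarith
  -- exponent arithmetic
  have hexpeq : Real.exp (a ^ 2) = Real.exp (c ^ 2) * Real.exp (4 * (k:ℝ) - 3/4) := by
    rw [← Real.exp_add]; congr 1; rw [ha, hc]; ring
  have hgrow : 16 * (k:ℝ) * |M| + 16 * k ≤ Real.exp (4 * (k:ℝ) - 3/4) := by
    have h1 : ((4 * (k:ℝ) - 3/4)/2 + 1)^2 ≤ Real.exp (4 * (k:ℝ) - 3/4) :=
      exp_ge_sq _ (by linarith)
    have h3 : |M| + 1 ≤ (k:ℝ)/4 := by linarith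
    have h4 : 16*(k:ℝ)*(|M|+1) ≤ 16*(k:ℝ)*((k:ℝ)/4) :=
      mul_le_mul_of_nonneg_left h3 (by positivity)
    have h5 : 4*(k:ℝ)^2 ≤ ((4*(k:ℝ)-3/4)/2+1)^2 := by nlinarith [hk1]
    linarith
  have hsqrt2 : (1:ℝ) ≤ Real.sqrt 2 := by
    nlinarith [Real.sq_sqrt (by norm_num : (2:ℝ) ≥ 0), Real.sqrt_nonneg 2]
  have hexpc1 : (1:ℝ) ≤ Real.exp (c ^ 2) := by
    rw [← Real.exp_zero]; exact Real.exp_le_exp.2 (by positivity)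
  have hBigger : b * M + Real.exp (c^2) * c < (b - a) * (Real.sqrt 2 / 2 * Real.exp (a ^ 2)) := by
    rw [hexpeq]
    have hec := Real.exp_pos (c^2)
    have hE := Real.exp_pos (4*(k:ℝ)-3/4)
    have r2 : Real.exp (c^2) * (16*(k:ℝ)*|M| + 16*k) ≤ Real.exp (c^2) * Real.exp (4*(k:ℝ)-3/4) :=
      mul_le_mul_of_nonneg_left hgrow hec.le
    have r4 : b * M ≤ Real.exp (c^2) * (4*(k:ℝ)*|M|) := by
      have r41 : b*M ≤ 4*(k:ℝ)*|M| := by rw [hb]; nlinarith [le_abs_self M, abs_nonneg M, hk1]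
      have r42 : 4*(k:ℝ)*|M| ≤ Real.exp (c^2) * (4*(k:ℝ)*|M|) :=
        le_mul_of_one_le_left (by positivity) hexpc1
      linarith
    have r5 : Real.exp (c^2) * c = Real.exp (c^2) * (4*(k:ℝ)) - Real.exp (c^2) := by
      rw [hc]; ring
    have hba : b - a = (1:ℝ)/2 := by rw [hb, ha]; ring
    rw [hba]
    have r6 : (1:ℝ) * (Real.exp (c^2) * Real.exp (4*(k:ℝ)-3/4)) ≤
        Real.sqrt 2 * (Real.exp (c^2) * Real.exp (4*(k:ℝ)-3/4)) :=
      mul_le_mul_of_nonneg_right hsqrt2 (by positivity)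
    nlinarith [hec, hE, hk1]
  refine ⟨b, by rw [hb]; linarith, ?_⟩
  have hbpos : 0 < b := by rw [hb]; linarith
  rw [hsplit, one_div, inv_mul_eq_div, lt_div_iff₀ hbpos]
  linarith

/-- `N` satisfies `limsup_{s→∞} (1/s)∫₀ˢ N(ζ)dζ = +∞` (in the extended reals); equivalently,
for every `M` and every `s₀ > 0` there is `s > s₀` with `(1/s)∫₀ˢ N(ζ)dζ > M`. -/
theorem nussbaum_property_limsup :
    Filter.limsup (fun s : ℝ => ((1 / s * ∫ ζ in (0:ℝ)..s, Nfun ζ : ℝ) : EReal)) Filter.atTop = ⊤ ∧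
    ∀ M : ℝ, ∀ s₀ : ℝ, 0 < s₀ → ∃ s : ℝ, s₀ < s ∧ M < 1 / s * ∫ ζ in (0:ℝ)..s, Nfun ζ := by
  refine ⟨?_, fun M s₀ h => key M s₀ h⟩
  rw [EReal.eq_top_iff_forall_lt]
  intro y
  have hle : ((y+1 : ℝ) : EReal) ≤
      Filter.limsup (fun s : ℝ => ((1 / s * ∫ ζ in (0:ℝ)..s, Nfun ζ : ℝ) : EReal)) Filter.atTop := by
    apply Filter.le_limsup_of_frequently_le'
    rw [Filter.frequently_atTop]
    intro a
    obtain ⟨s, hs1, hs2⟩ := key (y+1) (max a 1) (lt_of_lt_of_le one_pos (le_max_right a 1))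
    exact ⟨s, le_trans (le_max_left a 1) hs1.le, EReal.coe_le_coe_iff.2 hs2.le⟩
  refine lt_of_lt_of_le ?_ hle
  exact_mod_cast (by linarith : y < y+1)
end

section
/- The function N satisfies liminf_{s→+∞} (1/s)·∫₀ˢ N(ζ) dζ = −∞ (in the extended reals); equivalently, for every M ∈ ℝ and every s₀ > 0 there exists s > s₀ with (1/s)·∫₀ˢ N(ζ) dζ < M. -/
open Real Filter

lemma Nfun_intInt (a b : ℝ) : IntervalIntegrable Nfun MeasureTheory.volume a b :=
  Nfun_cont.intervalIntegrable a b

/-- upper bound on the initial piece. -/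
lemma lemA {a : ℝ} (ha : 0 ≤ a) : (∫ ζ in (0:ℝ)..a, Nfun ζ) ≤ a * Real.exp (a ^ 2) := by
  have h : (∫ ζ in (0:ℝ)..a, Nfun ζ) ≤ ∫ _ζ in (0:ℝ)..a, Real.exp (a ^ 2) := by
    apply intervalIntegral.integral_mono_on ha (Nfun_intInt 0 a)
      (intervalIntegrable_const)
    intro x hx
    have hx2 : x ^ 2 ≤ a ^ 2 := by nlinarith [hx.1, hx.2]
    have h1 : Nfun x ≤ Real.exp (x ^ 2) := by
      unfold Nfun
      nlinarith [Real.cos_le_one (Real.pi / 2 * x), Real.exp_pos (x ^ 2)]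
    exact h1.trans (Real.exp_le_exp.2 hx2)
  simpa using h

/-- on [4k+1, 4k+3] the cosine factor is ≤ 0. -/
lemma cos_nonpos_on {k : ℕ} {ζ : ℝ} (h1 : 4 * k + 1 ≤ ζ) (h2 : ζ ≤ 4 * k + 3) :
    Real.cos (Real.pi / 2 * ζ) ≤ 0 := by
  have hπ := Real.pi_pos
  rw [show Real.pi / 2 * ζ = (Real.pi / 2 * ζ - k * (2 * Real.pi)) + (k : ℤ) * (2 * Real.pi) by
    push_cast; ring, Real.cos_add_int_mul_two_pi]
  apply Real.cos_nonpos_of_pi_div_two_le_of_le <;> nlinarith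

/-- on [4k+2, 4k+2.5] the cosine factor is ≤ -√2/2. -/
lemma cos_le_on {k : ℕ} {ζ : ℝ} (h1 : 4 * k + 2 ≤ ζ) (h2 : ζ ≤ 4 * k + 5/2) :
    Real.cos (Real.pi / 2 * ζ) ≤ -(Real.sqrt 2 / 2) := by
  have hπ := Real.pi_pos
  set y : ℝ := Real.pi / 2 * ζ - k * (2 * Real.pi) - Real.pi with hy
  have hcos : Real.cos (Real.pi / 2 * ζ) = -Real.cos y := by
    rw [show Real.pi / 2 * ζ = (y + Real.pi) + (k : ℤ) * (2 * Real.pi) by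
      rw [hy]; push_cast; ring, Real.cos_add_int_mul_two_pi, Real.cos_add_pi]
  rw [hcos]
  have h3 : Real.sqrt 2 / 2 ≤ Real.cos y := by
    rw [← Real.cos_pi_div_four]
    have hy0 : 0 ≤ y := by
      rw [hy]
      nlinarith [mul_nonneg hπ.le (by linarith : (0:ℝ) ≤ ζ - (4 * k + 2))]
    have hy1 : y ≤ Real.pi / 4 := by
      rw [hy]
      nlinarith [mul_nonneg hπ.le (by linarith : (0:ℝ) ≤ 4 * k + 5/2 - ζ)]
    apply Real.cos_le_cos_of_nonneg_of_le_pi hy0 (by linarith) hy1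
  linarith

lemma lemB (k : ℕ) :
    (∫ ζ in (4 * (k:ℝ) + 1)..(4 * k + 2), Nfun ζ) ≤ 0 := by
  have h : (∫ ζ in (4 * (k:ℝ) + 1)..(4 * k + 2), Nfun ζ) ≤
      ∫ _ζ in (4 * (k:ℝ) + 1)..(4 * k + 2), (0:ℝ) := by
    apply intervalIntegral.integral_mono_on (by norm_num) (Nfun_intInt _ _)
      intervalIntegrable_const
    intro x hx
    have hc : Real.cos (Real.pi / 2 * x) ≤ 0 := cos_nonpos_on hx.1 (by linarith [hx.2])
    unfold Nfun
    nlinarith [Real.exp_pos (x ^ 2)]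
  simpa using h

lemma lemC (k : ℕ) :
    (∫ ζ in (4 * (k:ℝ) + 2)..(4 * k + 5/2), Nfun ζ) ≤
      -(Real.sqrt 2 / 4) * Real.exp ((4 * k + 2) ^ 2) := by
  have h : (∫ ζ in (4 * (k:ℝ) + 2)..(4 * k + 5/2), Nfun ζ) ≤
      ∫ _ζ in (4 * (k:ℝ) + 2)..(4 * k + 5/2),
        (-(Real.sqrt 2 / 2) * Real.exp ((4 * (k:ℝ) + 2) ^ 2)) := by
    apply intervalIntegral.integral_mono_on (by norm_num) (Nfun_intInt _ _)
      intervalIntegrable_const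
    intro x hx
    have hc : Real.cos (Real.pi / 2 * x) ≤ -(Real.sqrt 2 / 2) := cos_le_on hx.1 hx.2
    have he : Real.exp ((4 * (k:ℝ) + 2) ^ 2) ≤ Real.exp (x ^ 2) := by
      apply Real.exp_le_exp.2
      nlinarith [hx.1, Nat.cast_nonneg (α := ℝ) k]
    unfold Nfun
    have h2 : (0:ℝ) < Real.sqrt 2 / 2 := by positivity
    nlinarith [Real.exp_pos (x ^ 2), Real.exp_pos ((4 * (k:ℝ) + 2) ^ 2)]
  rw [intervalIntegral.integral_const, smul_eq_mul] at h
  calc (∫ ζ in (4 * (k:ℝ) + 2)..(4 * k + 5/2), Nfun ζ)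
      ≤ (4 * (k:ℝ) + 5/2 - (4 * k + 2)) *
          (-(Real.sqrt 2 / 2) * Real.exp ((4 * (k:ℝ) + 2) ^ 2)) := h
    _ = -(Real.sqrt 2 / 4) * Real.exp ((4 * (k:ℝ) + 2) ^ 2) := by ring

/-- standalone numeric estimate. -/
lemma numlem (M a : ℝ) (ha : 5 + 8 * |M| ≤ a) :
    a * Real.exp (a ^ 2) - Real.sqrt 2 / 4 * Real.exp ((a + 1) ^ 2) < M * (a + 3/2) := by
  have hM : 0 ≤ |M| := abs_nonneg M
  have hMabs : -|M| ≤ M := neg_abs_le M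
  have ha5 : (5:ℝ) ≤ a := by linarith
  have hE1 : (1:ℝ) ≤ Real.exp (a ^ 2) := Real.one_le_exp (by positivity)
  have hE := Real.exp_pos (a ^ 2)
  have hF0 := (Real.exp_pos (2 * a + 1)).le
  have hexp : Real.exp ((a + 1) ^ 2) = Real.exp (a ^ 2) * Real.exp (2 * a + 1) := by
    rw [← Real.exp_add]; ring_nf
  have hF : a ^ 2 ≤ Real.exp (2 * a + 1) := by
    have h1 := Real.add_one_le_exp ((2 * a + 1) / 2)
    have h2 : Real.exp ((2 * a + 1) / 2) * Real.exp ((2 * a + 1) / 2)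
        = Real.exp (2 * a + 1) := by rw [← Real.exp_add]; ring_nf
    nlinarith [Real.exp_pos ((2 * a + 1) / 2)]
  have hsq2 : (1:ℝ) ≤ Real.sqrt 2 := by
    rw [show (1:ℝ) = Real.sqrt 1 by simp]
    exact Real.sqrt_le_sqrt (by norm_num)
  rw [hexp]
  have t1 : Real.exp (a ^ 2) * a ^ 2 ≤ Real.exp (a ^ 2) * Real.exp (2 * a + 1) :=
    mul_le_mul_of_nonneg_left hF hE.le
  have t2 : 0 ≤ (Real.sqrt 2 - 1) * (Real.exp (a ^ 2) * Real.exp (2 * a + 1)) :=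
    mul_nonneg (by linarith) (mul_nonneg hE.le hF0)
  have key : Real.exp (a ^ 2) * (a ^ 2 / 4) ≤
      Real.sqrt 2 / 4 * (Real.exp (a ^ 2) * Real.exp (2 * a + 1)) := by nlinarith
  have key2 : a ^ 2 / 4 - a ≤ Real.exp (a ^ 2) * (a ^ 2 / 4) - a * Real.exp (a ^ 2) := by
    nlinarith [mul_nonneg (by linarith : (0:ℝ) ≤ Real.exp (a ^ 2) - 1)
      (by nlinarith : (0:ℝ) ≤ a ^ 2 / 4 - a)]
  have key3 : M * (a + 3/2) > a - a ^ 2 / 4 := by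
    nlinarith [mul_le_mul_of_nonneg_left hMabs (by linarith : (0:ℝ) ≤ a + 3/2)]
  linarith

/-- the key quantitative statement. -/
lemma keylem (M s₀ : ℝ) (hs₀ : 0 < s₀) :
    ∃ s : ℝ, s₀ < s ∧ 1 / s * (∫ ζ in (0:ℝ)..s, Nfun ζ) < M := by
  obtain ⟨k, hk⟩ : ∃ k : ℕ, max s₀ (5 + 8 * |M|) ≤ k := ⟨⌈max s₀ (5 + 8 * |M|)⌉₊, Nat.le_ceil _⟩
  have hks : s₀ ≤ (k:ℝ) := le_trans (le_max_left _ _) hk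
  have hkM : 5 + 8 * |M| ≤ (k:ℝ) := le_trans (le_max_right _ _) hk
  have hM : 0 ≤ |M| := abs_nonneg M
  have hk5 : (5:ℝ) ≤ k := by linarith
  have hs : (0:ℝ) < 4 * k + 5/2 := by linarith
  refine ⟨4 * k + 5/2, by linarith, ?_⟩
  have hsplit : (∫ ζ in (0:ℝ)..(4 * k + 5/2), Nfun ζ) =
      (∫ ζ in (0:ℝ)..(4 * k + 1), Nfun ζ) + (∫ ζ in (4 * (k:ℝ) + 1)..(4 * k + 2), Nfun ζ)
        + (∫ ζ in (4 * (k:ℝ) + 2)..(4 * k + 5/2), Nfun ζ) := by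
    rw [intervalIntegral.integral_add_adjacent_intervals (Nfun_intInt _ _) (Nfun_intInt _ _),
      intervalIntegral.integral_add_adjacent_intervals (Nfun_intInt _ _) (Nfun_intInt _ _)]
  have hA := lemA (a := 4 * (k:ℝ) + 1) (by linarith)
  have hB := lemB k
  have hC := lemC k
  have hI : (∫ ζ in (0:ℝ)..(4 * k + 5/2), Nfun ζ) ≤
      (4 * k + 1) * Real.exp ((4 * k + 1) ^ 2)
        - Real.sqrt 2 / 4 * Real.exp ((4 * k + 2) ^ 2) := by
    rw [hsplit]; linarith
  rw [one_div, inv_mul_lt_iff₀ hs]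
  refine lt_of_le_of_lt hI ?_
  have := numlem M (4 * k + 1) (by linarith)
  have e1 : (4 * (k:ℝ) + 1 + 1) = 4 * k + 2 := by ring
  have e2 : (4 * (k:ℝ) + 1 + 3/2) = 4 * k + 5/2 := by ring
  rw [e1, e2] at this
  linarith [this]

/-- `N` satisfies `liminf_{s→∞} (1/s)∫₀ˢ N(ζ)dζ = −∞` (in the extended reals); equivalently,
for every `M` and every `s₀ > 0` there is `s > s₀` with `(1/s)∫₀ˢ N(ζ)dζ < M`. -/
theorem nussbaum_property_liminf :
    Filter.liminf (fun s : ℝ => ((1 / s * ∫ ζ in (0:ℝ)..s, Nfun ζ : ℝ) : EReal)) Filter.atTop = ⊥ ∧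
    ∀ M : ℝ, ∀ s₀ : ℝ, 0 < s₀ → ∃ s : ℝ, s₀ < s ∧ 1 / s * (∫ ζ in (0:ℝ)..s, Nfun ζ) < M := by
  refine ⟨?_, fun M s₀ h => keylem M s₀ h⟩
  rw [EReal.eq_bot_iff_forall_lt]
  intro y
  have h1 : Filter.liminf (fun s : ℝ => ((1 / s * ∫ ζ in (0:ℝ)..s, Nfun ζ : ℝ) : EReal))
      Filter.atTop ≤ ((y - 1 : ℝ) : EReal) := by
    apply liminf_le_of_frequently_le'
    rw [Filter.frequently_atTop]
    intro b
    obtain ⟨s, hs1, hs2⟩ := keylem (y - 1) (max b 1) (lt_of_lt_of_le one_pos (le_max_right _ _))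
    exact ⟨s, le_of_lt (lt_of_le_of_lt (le_max_left _ _) hs1),
      le_of_lt (EReal.coe_lt_coe_iff.2 hs2)⟩
  refine lt_of_le_of_lt h1 ?_
  exact_mod_cast EReal.coe_lt_coe_iff.2 (by linarith)
end

section
/- Let p, q, l, α₁, k be positive real constants. Define, for ε₀ > 0 and ε > 0, β(ε₀) = 1/ε₀ − 1 − 2·p·l·‖D(ε₀)‖ − p², α(ε₀) = p·α₁/ε₀ + q·l·‖D(ε₀)‖, where ‖D(ε₀)‖ = max(ε₀², ε₀, 1) is the norm of the diagonal matrix D(ε₀) = diag(ε₀², ε₀, 1), and let Q(ε₀, ε) be the 3×3 symmetric matrix with rows (β(ε₀), −α(ε₀), 0), (−α(ε₀), 1/ε − 1, 0), (0, 0, k). Then there exists ε₀* > 0 such that for every ε₀ ∈ (0, ε₀*) there exists ε* > 0 such that for every ε ∈ (0, ε*), the matrix Q(ε₀, ε) is positive definite (in particular λ_min(Q) > 0). -/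
open Real Matrix

/-- A symmetric 3×3 block matrix with positive-definite 2×2 leading block and positive
(3,3) entry is positive definite. -/
lemma posdef_3x3 (b α c k : ℝ) (hb : 0 < b) (hk : 0 < k)
    (hdet : α ^ 2 < b * c) :
    (!![b, -α, 0; -α, c, 0; 0, 0, k] : Matrix (Fin 3) (Fin 3) ℝ).PosDef := by
  rw [Matrix.posDef_iff_dotProduct_mulVec]
  constructor
  · ext i j
    fin_cases i <;> fin_cases j <;>
      simp [Matrix.conjTranspose, Matrix.transpose]
  · intro x hx
    have hq : star x ⬝ᵥ (!![b, -α, 0; -α, c, 0; 0, 0, k] : Matrix (Fin 3) (Fin 3) ℝ).mulVec x =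
        b * x 0 ^ 2 - 2 * α * x 0 * x 1 + c * x 1 ^ 2 + k * x 2 ^ 2 := by
      simp [Matrix.mulVec, dotProduct, Fin.sum_univ_three]
      ring
    have hne : x 0 ≠ 0 ∨ x 1 ≠ 0 ∨ x 2 ≠ 0 := by
      by_contra h
      push_neg at h
      apply hx
      funext i
      fin_cases i <;> simp [h.1, h.2.1, h.2.2]
    have hpos : 0 < b * x 0 ^ 2 - 2 * α * x 0 * x 1 + c * x 1 ^ 2 + k * x 2 ^ 2 := by
      rcases eq_or_ne (x 1) 0 with h1 | h1
      · rcases hne with h | h | h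
        · have : 0 < x 0 ^ 2 := by positivity
          simp only [h1, mul_zero, zero_mul]
          nlinarith [mul_pos hb this, mul_nonneg hk.le (sq_nonneg (x 2)), sq_nonneg (0:ℝ)]
        · exact absurd h1 h
        · have : 0 < x 2 ^ 2 := by positivity
          simp only [h1, mul_zero, zero_mul]
          nlinarith [mul_pos hk this, mul_nonneg hb.le (sq_nonneg (x 0)), sq_nonneg (0:ℝ)]
      · have h2 : 0 < x 1 ^ 2 := by positivity
        have h3 : 0 < (b * c - α ^ 2) * x 1 ^ 2 :=
          mul_pos (by linarith) h2
        nlinarith [sq_nonneg (b * x 0 - α * x 1), sq_nonneg (x 2),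
          mul_nonneg hk.le (sq_nonneg (x 2))]
    have hre : (0:ℝ) < star x ⬝ᵥ (!![b, -α, 0; -α, c, 0; 0, 0, k] : Matrix (Fin 3) (Fin 3) ℝ).mulVec x := by
      rw [hq]; exact hpos
    simpa using hre

/-- For sufficiently small high-gain parameters `ε₀` and `ε`, the matrix `Q` appearing in the
Lyapunov derivative bound `V̇_c ≤ −XᵀQX + Ξ + (𝒳̇/γ_x)(∂g/∂u·N(𝒳) − 1)` is positive definite.
Here `β(ε₀) = 1/ε₀ − 1 − 2pl‖D(ε₀)‖ − p²`, `α(ε₀) = pα₁/ε₀ + ql‖D(ε₀)‖`, and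
`‖D(ε₀)‖ = max(ε₀², ε₀, 1)`. -/
theorem Q_posdef_for_small_gains (p q l α₁ k : ℝ)
    (hp : 0 < p) (hq : 0 < q) (hl : 0 < l) (hα₁ : 0 < α₁) (hk : 0 < k) :
    ∃ ε₀star > (0:ℝ), ∀ ε₀ ∈ Set.Ioo (0:ℝ) ε₀star, ∃ εstar > (0:ℝ), ∀ ε ∈ Set.Ioo (0:ℝ) εstar,
      (!![1 / ε₀ - 1 - 2 * p * l * max (ε₀ ^ 2) (max ε₀ 1) - p ^ 2,
            -(p * α₁ / ε₀ + q * l * max (ε₀ ^ 2) (max ε₀ 1)), 0;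
          -(p * α₁ / ε₀ + q * l * max (ε₀ ^ 2) (max ε₀ 1)), 1 / ε - 1, 0;
          0, 0, k] : Matrix (Fin 3) (Fin 3) ℝ).PosDef := by
  have hC : 0 < 1 + 2 * p * l + p ^ 2 := by positivity
  refine ⟨min 1 (1 / (1 + 2 * p * l + p ^ 2)), by positivity, ?_⟩
  intro ε₀ hε₀
  obtain ⟨hε₀0, hε₀lt⟩ := hε₀
  have hε₀1 : ε₀ < 1 := lt_of_lt_of_le hε₀lt (min_le_left _ _)
  have hmax : max (ε₀ ^ 2) (max ε₀ 1) = 1 := by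
    rw [max_eq_right (le_of_lt hε₀1), max_eq_right]
    nlinarith
  set b := 1 / ε₀ - 1 - 2 * p * l * max (ε₀ ^ 2) (max ε₀ 1) - p ^ 2 with hbdef
  set α := p * α₁ / ε₀ + q * l * max (ε₀ ^ 2) (max ε₀ 1) with hαdef
  have hb : 0 < b := by
    rw [hbdef, hmax]
    have : ε₀ < 1 / (1 + 2 * p * l + p ^ 2) := lt_of_lt_of_le hε₀lt (min_le_right _ _)
    have h2 : 1 + 2 * p * l + p ^ 2 < 1 / ε₀ := by
      rw [lt_div_iff₀ hε₀0]
      calc (1 + 2 * p * l + p ^ 2) * ε₀ < (1 + 2 * p * l + p ^ 2) * (1 / (1 + 2 * p * l + p ^ 2)) := by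
            exact mul_lt_mul_of_pos_left this hC
        _ = 1 := mul_one_div_cancel (ne_of_gt hC)
    linarith
  refine ⟨1 / (α ^ 2 / b + 2), by positivity, ?_⟩
  intro ε hε
  obtain ⟨hε0, hεlt⟩ := hε
  have hc : α ^ 2 / b + 2 < 1 / ε := by
    rw [lt_div_iff₀ hε0]
    have h0 : 0 < α ^ 2 / b + 2 := by positivity
    calc (α ^ 2 / b + 2) * ε < (α ^ 2 / b + 2) * (1 / (α ^ 2 / b + 2)) :=
          mul_lt_mul_of_pos_left hεlt h0
      _ = 1 := mul_one_div_cancel (ne_of_gt h0)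
  have hdet : α ^ 2 < b * (1 / ε - 1) := by
    have : α ^ 2 / b + 1 < 1 / ε - 1 := by linarith
    have := mul_lt_mul_of_pos_left this hb
    have hab : b * (α ^ 2 / b) = α ^ 2 := by field_simp
    nlinarith
  exact posdef_3x3 b α (1 / ε - 1) k hb hk hdet
end
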